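/- For all patterns p and p' for which the join p ⊔ p' exists, the relation ≡_{p ⊔ p'} equals the intersection of ≡_p and ≡_{p'}: for all values v, v', v ≡_{p ⊔ p'} v' if and only if v ≡_p v' and v ≡_{p'} v'. -/
import Mathlib


namespace Prov

abbrev Var := String

/-- Expressions of the call-by-value core calculus (needed for closures). -/
inductive Expr : Type where
  | var : Var → Expr
  | const : ℕ → Expr
  | prim : String → List Expr → Expr
  | pair : Expr → Expr → Expr
  | fst : Expr → Expr
  | snd : Expr → Expr
  | inl : Expr → Expr
  | inr : Expr → Expr
  | case : Expr → Var → Expr → Var → Expr → Expr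
  | fn : Var → Var → Expr → Expr
  | app : Expr → Expr → Expr
  | roll : Expr → Expr
  | unroll : Expr → Expr
  | letin : Var → Expr → Expr → Expr

/-- Values; closures `⟨fun f(x).e, γ⟩` record an environment. -/
inductive Val : Type where
  | const : ℕ → Val
  | pair : Val → Val → Val
  | inl : Val → Val
  | inr : Val → Val
  | roll : Val → Val
  | closure : Var → Var → Expr → (Var → Val) → Val

abbrev Env := Var → Val

/-- Patterns (partial values): the hole `□`, the wildcard `◇`, constants, pairs,
constructor patterns (`inl`, `inr`, `roll`) and closure patterns `⟨κ, ρ⟩` with an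
environment of patterns. -/
inductive Pat : Type where
  | hole : Pat
  | wild : Pat
  | const : ℕ → Pat
  | pair : Pat → Pat → Pat
  | inl : Pat → Pat
  | inr : Pat → Pat
  | roll : Pat → Pat
  | closure : Var → Var → Expr → (Var → Pat) → Pat

/-- `p[◇/□]`: replace every hole `□` in `p` by the wildcard `◇`. -/
def substHole : Pat → Pat
  | .hole => .wild
  | .wild => .wild
  | .const c => .const c
  | .pair p1 p2 => .pair (substHole p1) (substHole p2)
  | .inl p => .inl (substHole p)
  | .inr p => .inr (substHole p)
  | .roll p => .roll (substHole p)
  | .closure f x e ρ => .closure f x e (fun y => substHole (ρ y))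

/-- `v ≡_p v'`: the values `v` and `v'` agree according to the pattern `p`.
`≡_□` is total, `≡_◇` is the identity, and structured patterns are matched
componentwise (closure patterns pointwise on the environments). -/
inductive Agree : Pat → Val → Val → Prop where
  | hole : Agree .hole v v'
  | wild : Agree .wild v v
  | const : Agree (.const c) (.const c) (.const c)
  | pair : Agree p1 v1 w1 → Agree p2 v2 w2 →
      Agree (.pair p1 p2) (.pair v1 v2) (.pair w1 w2)
  | inl : Agree p v w → Agree (.inl p) (.inl v) (.inl w)
  | inr : Agree p v w → Agree (.inr p) (.inr v) (.inr w)
  | roll : Agree p v w → Agree (.roll p) (.roll v) (.roll w)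
  | closure : (∀ y, Agree (ρ y) (γ y) (γ' y)) →
      Agree (.closure f x e ρ) (.closure f x e γ) (.closure f x e γ')

/-- The partial join `p ⊔ p'` of patterns, as a relation `Join p p' (p ⊔ p')`;
undefined (no rule) on structurally incompatible patterns. -/
inductive Join : Pat → Pat → Pat → Prop where
  | holeL : Join .hole p p
  | holeR : Join p .hole p
  | wildL : Join .wild p (substHole p)
  | wildR : Join p .wild (substHole p)
  | const : Join (.const c) (.const c) (.const c)
  | pair : Join p1 q1 r1 → Join p2 q2 r2 →
      Join (.pair p1 p2) (.pair q1 q2) (.pair r1 r2)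
  | inl : Join p q r → Join (.inl p) (.inl q) (.inl r)
  | inr : Join p q r → Join (.inr p) (.inr q) (.inr r)
  | roll : Join p q r → Join (.roll p) (.roll q) (.roll r)
  | closure : (∀ y, Join (ρ y) (ρ' y) (ρ'' y)) →
      Join (.closure f x e ρ) (.closure f x e ρ') (.closure f x e ρ'')

lemma agree_substHole_of (p : Pat) (v w : Val) (h : Agree p v w) (hvw : v = w) :
    Agree (substHole p) v w := by
  induction h with
  | hole => cases hvw; exact .wild
  | wild => exact .wild
  | const => exact .const
  | pair _ _ ih1 ih2 =>
    injection hvw with e1 e2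
    exact .pair (ih1 e1) (ih2 e2)
  | inl _ ih => injection hvw with e; exact .inl (ih e)
  | inr _ ih => injection hvw with e; exact .inr (ih e)
  | roll _ ih => injection hvw with e; exact .roll (ih e)
  | @closure ρ γ γ' f x e _ ih =>
    injection hvw with _ _ _ eγ
    exact .closure (fun y => ih y (congrFun eγ y))

lemma agree_substHole (p : Pat) (v v' : Val) :
    Agree (substHole p) v v' ↔ (v = v' ∧ Agree p v v') := by
  constructor
  · intro h
    induction p generalizing v v' with
    | hole => cases h; exact ⟨rfl, .hole⟩
    | wild => cases h; exact ⟨rfl, .wild⟩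
    | const c => cases h; exact ⟨rfl, .const⟩
    | pair p1 p2 ih1 ih2 =>
      cases h with
      | pair h1 h2 =>
        obtain ⟨e1, a1⟩ := ih1 _ _ h1
        obtain ⟨e2, a2⟩ := ih2 _ _ h2
        exact ⟨by rw [e1, e2], .pair a1 a2⟩
    | inl p ih =>
      cases h with
      | inl h => obtain ⟨e, a⟩ := ih _ _ h; exact ⟨by rw [e], .inl a⟩
    | inr p ih =>
      cases h with
      | inr h => obtain ⟨e, a⟩ := ih _ _ h; exact ⟨by rw [e], .inr a⟩
    | roll p ih =>
      cases h with
      | roll h => obtain ⟨e, a⟩ := ih _ _ h; exact ⟨by rw [e], .roll a⟩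
    | closure f x e ρ ih =>
      cases h with
      | closure h =>
        have heq : ∀ y, _ := fun y => ih y _ _ (h y)
        exact ⟨congrArg (Val.closure f x e) (funext fun y => (heq y).1),
          .closure (fun y => (heq y).2)⟩
  · rintro ⟨rfl, h⟩
    exact agree_substHole_of _ _ _ h rfl

/-- For all patterns `p, p'` whose join `p ⊔ p'` exists,
`(≡_{p ⊔ p'}) = (≡_p) ∩ (≡_{p'})`. -/
theorem agree_join (p p' q : Pat) (hj : Join p p' q) (v v' : Val) :
    Agree q v v' ↔ (Agree p v v' ∧ Agree p' v v') := by
  induction hj generalizing v v' with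
  | holeL => exact ⟨fun h => ⟨.hole, h⟩, fun h => h.2⟩
  | holeR => exact ⟨fun h => ⟨h, .hole⟩, fun h => h.1⟩
  | wildL =>
    rw [agree_substHole]
    constructor
    · rintro ⟨rfl, h⟩; exact ⟨.wild, h⟩
    · rintro ⟨hw, h⟩; cases hw; exact ⟨rfl, h⟩
  | wildR =>
    rw [agree_substHole]
    constructor
    · rintro ⟨rfl, h⟩; exact ⟨h, .wild⟩
    · rintro ⟨h, hw⟩; cases hw; exact ⟨rfl, h⟩
  | const => exact ⟨fun h => ⟨h, h⟩, fun h => h.1⟩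
  | pair _ _ ih1 ih2 =>
    constructor
    · intro h
      cases h with
      | pair h1 h2 =>
        obtain ⟨a1, b1⟩ := (ih1 _ _).mp h1
        obtain ⟨a2, b2⟩ := (ih2 _ _).mp h2
        exact ⟨.pair a1 a2, .pair b1 b2⟩
    · rintro ⟨ha, hb⟩
      cases ha with
      | pair a1 a2 =>
        cases hb with
        | pair b1 b2 =>
          exact .pair ((ih1 _ _).mpr ⟨a1, b1⟩) ((ih2 _ _).mpr ⟨a2, b2⟩)
  | inl _ ih =>
    constructor
    · intro h
      cases h with
      | inl h =>
        obtain ⟨a, b⟩ := (ih _ _).mp h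
        exact ⟨.inl a, .inl b⟩
    · rintro ⟨ha, hb⟩
      cases ha with
      | inl a => cases hb with
        | inl b => exact .inl ((ih _ _).mpr ⟨a, b⟩)
  | inr _ ih =>
    constructor
    · intro h
      cases h with
      | inr h =>
        obtain ⟨a, b⟩ := (ih _ _).mp h
        exact ⟨.inr a, .inr b⟩
    · rintro ⟨ha, hb⟩
      cases ha with
      | inr a => cases hb with
        | inr b => exact .inr ((ih _ _).mpr ⟨a, b⟩)
  | roll _ ih =>
    constructor
    · intro h
      cases h with
      | roll h =>
        obtain ⟨a, b⟩ := (ih _ _).mp h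
        exact ⟨.roll a, .roll b⟩
    · rintro ⟨ha, hb⟩
      cases ha with
      | roll a => cases hb with
        | roll b => exact .roll ((ih _ _).mpr ⟨a, b⟩)
  | closure _ ih =>
    constructor
    · intro h
      cases h with
      | closure h =>
        exact ⟨.closure (fun y => ((ih y _ _).mp (h y)).1),
          .closure (fun y => ((ih y _ _).mp (h y)).2)⟩
    · rintro ⟨ha, hb⟩
      cases ha with
      | closure a => cases hb with
        | closure b => exact .closure (fun y => (ih y _ _).mpr ⟨a y, b y⟩)

end Prov
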